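/- Let Ω be a topological space equipped with a continuous action of ℝⁿ, written (v, T) ↦ T − v, let β : ℝⁿ → ℝ be a linear functional, and let k ≥ 1 be an integer. If g : Ω → S¹ is continuous and satisfies g(T − v)^k = e^{2πiβ(v)} g(T)^k for all T ∈ Ω and v ∈ ℝⁿ, then g(T − v) = e^{2πiβ(v)/k} g(T) for all T ∈ Ω and v ∈ ℝⁿ; that is, g is a continuous eigenfunction with eigenvalue β/k. -/

import Mathlib

/-- Let `Ω` be a topological space equipped with a continuous action of `ℝⁿ`, written
`(v, T) ↦ T − v` (here `act v T`), let `β : ℝⁿ → ℝ` be a linear functional, and let `k ≥ 1`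
be an integer.  If `g : Ω → S¹` is continuous and satisfies
`g(T − v)^k = e^{2πiβ(v)} g(T)^k` for all `T` and `v`, then
`g(T − v) = e^{2πiβ(v)/k} g(T)` for all `T` and `v`; that is, `g` is a continuous
eigenfunction with eigenvalue `β/k`. -/
theorem stmt1 {Ω : Type*} [TopologicalSpace Ω] (n : ℕ)
    (act : (Fin n → ℝ) → Ω → Ω)
    (hact_cont : Continuous fun p : (Fin n → ℝ) × Ω => act p.1 p.2)
    (hact_zero : ∀ T, act 0 T = T)
    (hact_add : ∀ v w T, act (v + w) T = act v (act w T))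
    (β : (Fin n → ℝ) →ₗ[ℝ] ℝ) (k : ℕ) (hk : 1 ≤ k)
    (g : C(Ω, Circle))
    (h : ∀ (T : Ω) (v : Fin n → ℝ),
      ((g (act v T) : ℂ)) ^ k = Complex.exp (2 * Real.pi * Complex.I * (β v : ℝ)) * (g T : ℂ) ^ k) :
    ∀ (T : Ω) (v : Fin n → ℝ),
      (g (act v T) : ℂ) = Complex.exp (2 * Real.pi * Complex.I * ((β v : ℝ) / (k : ℝ))) * (g T : ℂ) := by
  intro T v
  have hkpos : 0 < k := hk
  have hk0 : (k : ℂ) ≠ 0 := Nat.cast_ne_zero.mpr hkpos.ne'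
  have hgT : (g T : ℂ) ≠ 0 := Circle.coe_ne_zero _
  set f : ℝ → ℂ := fun t =>
    (g (act (t • v) T) : ℂ) *
      Complex.exp (-(2 * Real.pi * Complex.I * ((t : ℂ) * ((β v : ℝ) : ℂ) / (k : ℂ)))) *
      (g T : ℂ)⁻¹ with hfdef
  have hf0 : f 0 = 1 := by
    simp [hfdef, hact_zero, hgT]
  have hfk : ∀ t : ℝ, (f t) ^ k = 1 := by
    intro t
    have hβ : ((β (t • v) : ℝ) : ℂ) = (t : ℂ) * ((β v : ℝ) : ℂ) := by
      rw [map_smul, smul_eq_mul]; push_cast; ring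
    have hh := h T (t • v)
    rw [hβ] at hh
    have hexp : (Complex.exp (-(2 * Real.pi * Complex.I * ((t : ℂ) * ((β v : ℝ) : ℂ) / (k : ℂ))))) ^ k
        = Complex.exp (-(2 * Real.pi * Complex.I * ((t : ℂ) * ((β v : ℝ) : ℂ)))) := by
      rw [← Complex.exp_nat_mul]
      congr 1
      field_simp
    calc (f t) ^ k
        = ((g (act (t • v) T) : ℂ)) ^ k *
            (Complex.exp (-(2 * Real.pi * Complex.I * ((t : ℂ) * ((β v : ℝ) : ℂ) / (k : ℂ))))) ^ k *
            ((g T : ℂ)⁻¹) ^ k := by rw [hfdef]; ring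
      _ = (Complex.exp (2 * Real.pi * Complex.I * ((t : ℂ) * ((β v : ℝ) : ℂ))) * (g T : ℂ) ^ k) *
            Complex.exp (-(2 * Real.pi * Complex.I * ((t : ℂ) * ((β v : ℝ) : ℂ)))) *
            ((g T : ℂ) ^ k)⁻¹ := by rw [hh, hexp, inv_pow]
      _ = 1 := by
          rw [mul_right_comm, mul_assoc (Complex.exp _), mul_inv_cancel₀ (pow_ne_zero k hgT),
            mul_one, ← Complex.exp_add, add_neg_cancel, Complex.exp_zero]
  have hfc : Continuous f := by
    apply Continuous.mul
    apply Continuous.mul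
    · have h1 : Continuous fun t : ℝ => act (t • v) T :=
        hact_cont.comp (Continuous.prodMk (continuous_id.smul continuous_const) continuous_const)
      exact continuous_subtype_val.comp (g.continuous.comp h1)
    · exact Complex.continuous_exp.comp (by continuity)
    · exact continuous_const
  -- the set of k-th roots of unity is finite, hence discrete
  set S : Set ℂ := {z : ℂ | z ^ k = 1} with hSdef
  have hSfin : S.Finite := by
    apply Set.Finite.subset (Polynomial.nthRoots k (1 : ℂ)).toFinset.finite_toSet
    intro z hz
    simpa only [Finset.mem_coe, Multiset.mem_toFinset, Polynomial.mem_nthRoots hkpos, hSdef, Set.mem_setOf_eq] using hz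
  haveI : Finite S := hSfin.to_subtype
  haveI : DiscreteTopology S := Finite.instDiscreteTopology
  have hconst : f 1 = f 0 :=
    IsPreconnected.constant_of_mapsTo (T := S) isPreconnected_univ (isDiscrete_iff_discreteTopology.mpr this) hfc.continuousOn
      (fun t _ => hfk t) (Set.mem_univ 1) (Set.mem_univ 0)
  have hf1 : f 1 = 1 := by rw [hconst, hf0]
  have : (g (act v T) : ℂ) *
      Complex.exp (-(2 * Real.pi * Complex.I * (((β v : ℝ) : ℂ) / (k : ℂ)))) *
      (g T : ℂ)⁻¹ = 1 := by
    have h1 := hf1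
    rw [hfdef] at h1
    simpa only [one_smul, Complex.ofReal_one, one_mul] using h1
  have hexpne : Complex.exp (-(2 * Real.pi * Complex.I * (((β v : ℝ) : ℂ) / (k : ℂ)))) ≠ 0 :=
    Complex.exp_ne_zero _
  push_cast
  field_simp at this ⊢
  rw [Complex.exp_neg, mul_inv_eq_iff_eq_mul₀ (Complex.exp_ne_zero _)] at this
  rw [this]
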